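/- Let A be a C*-algebra, let N be a full Hilbert A-module with A-valued inner product ⟨·,·⟩, let M be a full closed A-submodule of N with M⊥ = {0} in N, and suppose r0 : N → A is a nonzero bounded A-linear functional vanishing on M. Define ⟨x,y⟩₂ := ⟨x,y⟩ + r0(x)* · r0(y) for x, y ∈ N. Then ⟨·,·⟩₂ is again an A-valued inner product on N (A-linear in the second variable, hermitian, positive, definite), its restriction to M coincides with the original inner product, and ⟨n,n⟩ ≤ ⟨n,n⟩₂ ≤ (1 + ‖r0‖²)·⟨n,n⟩ holds in A for every n ∈ N, so the two induced norms on N are equivalent. -/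

import Mathlib

open scoped RightActions

/-- The right Hilbert C⋆-module class of the older Mathlib (`CStarModule` with `[SMul Aᵐᵒᵖ E]`
and `⟪x, y <• a⟫ = ⟪x, y⟫ * a`), restated here since Mathlib's `CStarModule` now uses left modules. -/
class CStarModuleRight (A : outParam <| Type*) (E : Type*) [NonUnitalSemiring A] [StarRing A]
    [Module ℂ A] [AddCommGroup E] [Module ℂ E] [PartialOrder A] [SMul Aᵐᵒᵖ E] [Norm A] [Norm E]
    extends Inner A E where
  inner_add_right {x} {y} {z} : inner x (y + z) = inner x y + inner x z
  inner_self_nonneg {x} : 0 ≤ inner x x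
  inner_self {x} : inner x x = 0 ↔ x = 0
  inner_op_smul_right {a : A} {x y : E} : inner x (y <• a) = inner x y * a
  inner_smul_right_complex {z : ℂ} {x} {y} : inner x (z • y) = z • inner x y
  star_inner x y : star (inner x y) = inner y x
  norm_eq_sqrt_norm_inner_self x : ‖x‖ = √‖inner x x‖

/-- The operator norm of a bounded `A`-linear functional `r0 : N → A`,
as the supremum of `‖r0 x‖` over the closed unit ball of `N`. -/
noncomputable def functionalOpNorm {A : Type*} [Norm A] {N : Type*} [Norm N]
    (r0 : N → A) : ℝ :=
  sSup ((fun x => ‖r0 x‖) '' {x : N | ‖x‖ ≤ 1})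

section AuxPerturbed

set_option linter.unusedSectionVars false

variable {A : Type*} [CStarAlgebra A] [PartialOrder A] [StarOrderedRing A]
    {N : Type*} [NormedAddCommGroup N] [NormedSpace ℂ N] [SMul Aᵐᵒᵖ N] [CStarModuleRight A N]

namespace CStarModuleRight

lemma inner_sub_right {x y z : N} :
    inner (𝕜 := A) x (y - z) = inner (𝕜 := A) x y - inner (𝕜 := A) x z := by
  apply eq_sub_of_add_eq
  rw [← CStarModuleRight.inner_add_right, sub_add_cancel]

lemma isSelfAdjoint_inner_self {x : N} : IsSelfAdjoint (inner (𝕜 := A) x x) :=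
  CStarModuleRight.star_inner x x

lemma norm_sq_eq {x : N} : ‖x‖ ^ 2 = ‖inner (𝕜 := A) x x‖ := by
  rw [CStarModuleRight.norm_eq_sqrt_norm_inner_self (A := A) x, Real.sq_sqrt (norm_nonneg _)]

lemma inner_op_smul_left {a : A} {x y : N} :
    inner (𝕜 := A) (x <• a) y = star a * inner (𝕜 := A) x y := by
  rw [← CStarModuleRight.star_inner y, CStarModuleRight.inner_op_smul_right, star_mul,
    CStarModuleRight.star_inner]

lemma norm_nonneg {x : N} : 0 ≤ ‖x‖ := _root_.norm_nonneg x

end CStarModuleRight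

/-- Two elements with identical inner products against everything are equal. -/
lemma aux_ext_inner (u v : N) (h : ∀ w : N, inner (𝕜 := A) w u = inner (𝕜 := A) w v) :
    u = v := by
  have h0 : inner (𝕜 := A) (u - v) (u - v) = 0 := by
    rw [CStarModuleRight.inner_sub_right, h (u - v), sub_self]
  exact sub_eq_zero.mp (CStarModuleRight.inner_self.mp h0)

lemma aux_op_smul_complex (z : ℂ) (y : N) : y <• (z • (1 : A)) = z • y := by
  apply aux_ext_inner
  intro w
  rw [CStarModuleRight.inner_op_smul_right, CStarModuleRight.inner_smul_right_complex,
    mul_smul_comm, mul_one]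

lemma aux_r0_smul (r0 : N → A) (hr0mod : ∀ (x : N) (a : A), r0 (x <• a) = r0 x * a)
    (z : ℂ) (y : N) : r0 (z • y) = z • r0 y := by
  rw [← aux_op_smul_complex z y, hr0mod, mul_smul_comm, mul_one]

lemma aux_key_bound (r0 : N → A) (c : ℝ) (hc : 0 ≤ c)
    (hr0mod : ∀ (x : N) (a : A), r0 (x <• a) = r0 x * a)
    (hbound : ∀ y : N, ‖r0 y‖ ≤ c * ‖y‖) (x : N) :
    star (r0 x) * r0 x ≤ c ^ 2 • inner (𝕜 := A) x x := by
  set K : A := inner (𝕜 := A) x x with hKdef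
  have hK : (0 : A) ≤ K := CStarModuleRight.inner_self_nonneg
  have hKsa : IsSelfAdjoint K := CStarModuleRight.isSelfAdjoint_inner_self
  set s : A := star (r0 x) * r0 x with hsdef
  -- step: for every ε > 0, s ≤ c^2 • K + (c^2 * ε) • 1
  have hstep : ∀ ε : ℝ, 0 < ε → s ≤ c ^ 2 • K + (c ^ 2 * ε) • (1 : A) := by
    intro ε hε
    have hspec : ∀ t ∈ spectrum ℝ K, (0 : ℝ) ≤ t := fun t ht =>
      spectrum_nonneg_of_nonneg hK ht
    have hpos : ∀ t ∈ spectrum ℝ K, (0 : ℝ) < t + ε := fun t ht => by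
      have := hspec t ht; linarith
    set g : ℝ → ℝ := fun t => (Real.sqrt (t + ε))⁻¹ with hgdef
    set e : ℝ → ℝ := fun t => Real.sqrt (t + ε) with hedef
    have he_cont : ContinuousOn e (spectrum ℝ K) := by fun_prop
    have hg_cont : ContinuousOn g (spectrum ℝ K) := by
      apply he_cont.inv₀
      intro t ht
      exact ne_of_gt (Real.sqrt_pos.mpr (hpos t ht))
    set d : A := cfc g K with hddef
    set E : A := cfc e K with hEdef
    have hd_sa : IsSelfAdjoint d := cfc_predicate g K
    have hE_sa : IsSelfAdjoint E := cfc_predicate e K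
    have hEd : E * d = 1 := by
      rw [hEdef, hddef, ← cfc_mul e g K he_cont hg_cont,
        cfc_congr (g := fun _ => (1 : ℝ)) (fun t ht => by
          exact mul_inv_cancel₀ (ne_of_gt (Real.sqrt_pos.mpr (hpos t ht)))),
        cfc_const_one ℝ K]
    have hdE : d * E = 1 := by
      rw [hddef, hEdef, ← cfc_mul g e K hg_cont he_cont,
        cfc_congr (g := fun _ => (1 : ℝ)) (fun t ht => by
          exact inv_mul_cancel₀ (ne_of_gt (Real.sqrt_pos.mpr (hpos t ht)))),
        cfc_const_one ℝ K]
    -- ‖x <• d‖ ≤ 1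
    have hdKd : cfc (fun t => g t * t * g t) K = d * K * d := by
      rw [cfc_mul (fun t => g t * t) g K (hg_cont.mul continuousOn_id) hg_cont,
        cfc_mul g (fun t => t) K hg_cont continuousOn_id, cfc_id' ℝ K]
    have hnorm_dKd : ‖d * K * d‖ ≤ 1 := by
      rw [← hdKd]
      apply norm_cfc_le zero_le_one
      intro t ht
      have ht0 := hspec t ht
      have ht1 := hpos t ht
      have hgg : g t * g t = (t + ε)⁻¹ := by
        rw [hgdef]
        simp only []
        rw [← mul_inv, Real.mul_self_sqrt (le_of_lt ht1)]
      have hval : g t * t * g t = t * (t + ε)⁻¹ := by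
        calc g t * t * g t = t * (g t * g t) := by ring
          _ = t * (t + ε)⁻¹ := by rw [hgg]
      rw [hval, Real.norm_of_nonneg (by positivity), ← div_eq_mul_inv, div_le_one ht1]
      linarith
    have hxd : ‖x <• d‖ ≤ 1 := by
      have h1 : ‖x <• d‖ ^ 2 ≤ 1 := by
        rw [CStarModuleRight.norm_sq_eq, CStarModuleRight.inner_op_smul_right,
          CStarModuleRight.inner_op_smul_left, hd_sa.star_eq]
        exact hnorm_dKd
      nlinarith [CStarModuleRight.norm_nonneg (x := x <• d)]
    have hrd : ‖r0 x * d‖ ≤ c := by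
      rw [← hr0mod]
      calc ‖r0 (x <• d)‖ ≤ c * ‖x <• d‖ := hbound _
        _ ≤ c * 1 := by nlinarith
        _ = c := mul_one c
    set b : A := star (r0 x * d) * (r0 x * d) with hbdef
    have hb_norm : ‖b‖ ≤ c ^ 2 := by
      rw [hbdef, CStarRing.norm_star_mul_self]
      nlinarith [norm_nonneg (r0 x * d)]
    have hb_sa : IsSelfAdjoint b := IsSelfAdjoint.star_mul_self _
    have hb_le : b ≤ algebraMap ℝ A (c ^ 2) := by
      calc b ≤ algebraMap ℝ A ‖b‖ := hb_sa.le_algebraMap_norm_self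
        _ ≤ algebraMap ℝ A (c ^ 2) := by
            rw [← sub_nonneg, ← map_sub, Algebra.algebraMap_eq_smul_one]
            exact smul_nonneg (by linarith) zero_le_one
    have hconj := star_left_conjugate_le_conjugate hb_le E
    rw [hE_sa.star_eq] at hconj
    have hb_eq : b = d * s * d := by
      rw [hbdef, hsdef, star_mul, hd_sa.star_eq]
      noncomm_ring
    have hlhs : E * b * E = s := by
      rw [hb_eq]
      calc E * (d * s * d) * E = (E * d) * s * (d * E) := by noncomm_ring
        _ = s := by rw [hEd, hdE, one_mul, mul_one]
    have hEE : E * E = K + ε • (1 : A) := by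
      rw [hEdef, ← cfc_mul e e K he_cont he_cont,
        cfc_congr (g := fun t => t + ε) (fun t ht => by
          exact Real.mul_self_sqrt (le_of_lt (hpos t ht)))]
      rw [cfc_add K _ _ (by fun_prop) (by fun_prop), cfc_id' ℝ K, cfc_const ε K,
        Algebra.algebraMap_eq_smul_one]
    have hrhs : E * algebraMap ℝ A (c ^ 2) * E = c ^ 2 • K + (c ^ 2 * ε) • (1 : A) := by
      rw [Algebra.algebraMap_eq_smul_one, mul_smul_comm, mul_one, smul_mul_assoc, hEE,
        smul_add, smul_smul]
    rw [hlhs, hrhs] at hconj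
    exact hconj
  -- now take the limit ε → 0⁺
  have hlim : Filter.Tendsto (fun ε : ℝ => c ^ 2 • K + (c ^ 2 * ε) • (1 : A))
      (nhdsWithin 0 (Set.Ioi 0)) (nhds (c ^ 2 • K)) := by
    have : Filter.Tendsto (fun ε : ℝ => c ^ 2 • K + (c ^ 2 * ε) • (1 : A))
        (nhds 0) (nhds (c ^ 2 • K + (c ^ 2 * (0:ℝ)) • (1 : A))) := by
      apply Filter.Tendsto.add tendsto_const_nhds
      exact ((continuous_const.mul continuous_id).smul continuous_const).tendsto 0
    simpa using this.mono_left nhdsWithin_le_nhds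
  exact le_of_tendsto_of_tendsto tendsto_const_nhds hlim
    (Filter.eventually_iff_exists_mem.mpr ⟨Set.Ioi 0, self_mem_nhdsWithin,
      fun ε hε => hstep ε hε⟩)

lemma aux_opNorm (r0 : N → A) (hr0cont : Continuous r0)
    (hr0add : ∀ x y : N, r0 (x + y) = r0 x + r0 y)
    (hsmul : ∀ (z : ℂ) (y : N), r0 (z • y) = z • r0 y) :
    0 ≤ functionalOpNorm r0 ∧ ∀ y : N, ‖r0 y‖ ≤ functionalOpNorm r0 * ‖y‖ := by
  have hr00 : r0 0 = 0 := by
    have h := hr0add 0 0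
    rw [add_zero] at h
    exact (left_eq_add.mp h)
  obtain ⟨δ, hδ, hδ'⟩ := Metric.continuous_iff.mp hr0cont 0 1 one_pos
  have hbdd : BddAbove ((fun x => ‖r0 x‖) '' {x : N | ‖x‖ ≤ 1}) := by
    refine ⟨2 / δ, ?_⟩
    rintro - ⟨x, hx, rfl⟩
    simp only [Set.mem_setOf_eq] at hx
    have hy : ‖((δ / 2 : ℝ) : ℂ) • x‖ < δ := by
      rw [norm_smul, Complex.norm_real, Real.norm_of_nonneg (by linarith)]
      nlinarith
    have h1 : ‖r0 (((δ / 2 : ℝ) : ℂ) • x)‖ < 1 := by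
      have := hδ' (((δ / 2 : ℝ) : ℂ) • x) (by simpa [dist_eq_norm] using hy)
      simpa [dist_eq_norm, hr00] using this
    rw [hsmul, norm_smul, Complex.norm_real, Real.norm_of_nonneg (by linarith)] at h1
    rw [show (2 : ℝ) / δ = 2 / δ from rfl, le_div_iff₀ hδ]
    nlinarith
  have hmem : (0 : ℝ) ∈ (fun x => ‖r0 x‖) '' {x : N | ‖x‖ ≤ 1} :=
    ⟨0, by simp, by simp [hr00]⟩
  have hc0 : 0 ≤ functionalOpNorm r0 := le_csSup hbdd hmem
  refine ⟨hc0, fun y => ?_⟩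
  rcases eq_or_ne y 0 with rfl | hy
  · simp [hr00]
  · have hny : (0 : ℝ) < ‖y‖ := norm_pos_iff.mpr hy
    set u : N := ((‖y‖⁻¹ : ℝ) : ℂ) • y with hu
    have hun : ‖u‖ ≤ 1 := by
      rw [hu, norm_smul, Complex.norm_real, Real.norm_of_nonneg (by positivity),
        inv_mul_cancel₀ (ne_of_gt hny)]
    have hru : ‖r0 u‖ ≤ functionalOpNorm r0 := le_csSup hbdd ⟨u, hun, rfl⟩
    have hyu : y = ((‖y‖ : ℝ) : ℂ) • u := by
      rw [hu, smul_smul, ← Complex.ofReal_mul, mul_inv_cancel₀ (ne_of_gt hny)]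
      simp
    calc ‖r0 y‖ = ‖y‖ * ‖r0 u‖ := by
          conv_lhs => rw [hyu, hsmul, norm_smul, Complex.norm_real,
            Real.norm_of_nonneg (le_of_lt hny)]
      _ ≤ ‖y‖ * functionalOpNorm r0 := by nlinarith
      _ = functionalOpNorm r0 * ‖y‖ := mul_comm _ _

end AuxPerturbed

/-- Let `A` be a C*-algebra, `N` a full Hilbert `A`-module, `M` a full closed
`A`-submodule with `M⊥ = {0}` in `N`, and `r0 : N → A` a nonzero bounded `A`-linear
functional vanishing on `M`.  Then `⟪x,y⟫₂ := ⟪x,y⟫ + r0(x)* ⬝ r0(y)` is again an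
`A`-valued inner product on `N`, restricting to the original one on `M`, and
`⟪n,n⟫ ≤ ⟪n,n⟫₂ ≤ (1 + ‖r0‖²) • ⟪n,n⟫` for all `n ∈ N`, so the induced norms are
equivalent. -/
theorem perturbed_inner_product_is_inner_product
    {A : Type*} [CStarAlgebra A] [PartialOrder A] [StarOrderedRing A]
    {N : Type*} [NormedAddCommGroup N] [NormedSpace ℂ N] [SMul Aᵐᵒᵖ N] [CStarModuleRight A N]
    [CompleteSpace N]
    -- `N` is full
    (hNfull : (Submodule.span ℂ
      {a : A | ∃ x y : N, a = inner (𝕜 := A) x y}).topologicalClosure = ⊤)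
    -- `M` is a closed `A`-submodule of `N`
    (M : Submodule ℂ N) (hMclosed : IsClosed (M : Set N))
    (hMsmul : ∀ (a : A), ∀ m ∈ M, m <• a ∈ M)
    -- `M` is full
    (hMfull : (Submodule.span ℂ
      {a : A | ∃ x ∈ M, ∃ y ∈ M, a = inner (𝕜 := A) x y}).topologicalClosure = ⊤)
    -- `M⊥ = {0}` in `N`
    (hMbot : ∀ n : N, (∀ m ∈ M, inner (𝕜 := A) m n = 0) → n = 0)
    -- `r0` is a nonzero bounded `A`-linear functional on `N` vanishing on `M`
    (r0 : N → A) (hr0cont : Continuous r0)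
    (hr0add : ∀ x y : N, r0 (x + y) = r0 x + r0 y)
    (hr0mod : ∀ (x : N) (a : A), r0 (x <• a) = r0 x * a)
    (hr0ne : ∃ x : N, r0 x ≠ 0)
    (hr0M : ∀ m ∈ M, r0 m = 0)
    -- the perturbed inner product
    (inner₂ : N → N → A) (hinner₂ : ∀ x y : N,
      inner₂ x y = inner (𝕜 := A) x y + star (r0 x) * r0 y) :
    -- additive and `A`-linear in the second variable
    (∀ x y z : N, inner₂ x (y + z) = inner₂ x y + inner₂ x z) ∧
    (∀ (x y : N) (a : A), inner₂ x (y <• a) = inner₂ x y * a) ∧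
    (∀ (x y : N) (z : ℂ), inner₂ x (z • y) = z • inner₂ x y) ∧
    -- hermitian
    (∀ x y : N, star (inner₂ x y) = inner₂ y x) ∧
    -- positive
    (∀ x : N, 0 ≤ inner₂ x x) ∧
    -- definite
    (∀ x : N, inner₂ x x = 0 ↔ x = 0) ∧
    -- restriction to `M` coincides with the original inner product
    (∀ x ∈ M, ∀ y ∈ M, inner₂ x y = inner (𝕜 := A) x y) ∧
    -- the two-sided norm estimate giving equivalence of the induced norms
    (∀ n : N, inner (𝕜 := A) n n ≤ inner₂ n n ∧
      inner₂ n n ≤ (1 + functionalOpNorm r0 ^ 2) • inner (𝕜 := A) n n) := by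
  have hsmul := aux_r0_smul r0 hr0mod
  have hr00 : r0 0 = 0 := by
    have h := hr0add 0 0
    rw [add_zero] at h
    exact (left_eq_add.mp h)
  obtain ⟨hc0, hbound⟩ := aux_opNorm r0 hr0cont hr0add hsmul
  have hkey : ∀ x : N, star (r0 x) * r0 x ≤ functionalOpNorm r0 ^ 2 • inner (𝕜 := A) x x :=
    aux_key_bound r0 (functionalOpNorm r0) hc0 hr0mod hbound
  refine ⟨?_, ?_, ?_, ?_, ?_, ?_, ?_, ?_⟩
  · intro x y z
    simp only [hinner₂, CStarModuleRight.inner_add_right, hr0add, mul_add]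
    abel
  · intro x y a
    simp only [hinner₂, CStarModuleRight.inner_op_smul_right, hr0mod, add_mul, mul_assoc]
  · intro x y z
    simp only [hinner₂, CStarModuleRight.inner_smul_right_complex, hsmul, mul_smul_comm, smul_add]
  · intro x y
    simp only [hinner₂, star_add, star_mul, star_star, CStarModuleRight.star_inner, mul_assoc]
  · intro x
    rw [hinner₂]
    exact add_nonneg CStarModuleRight.inner_self_nonneg (star_mul_self_nonneg _)
  · intro x
    constructor
    · intro h
      rw [hinner₂] at h
      have h1 : inner (𝕜 := A) x x ≤ 0 := by
        calc inner (𝕜 := A) x x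
            ≤ inner (𝕜 := A) x x + star (r0 x) * r0 x :=
              le_add_of_nonneg_right (star_mul_self_nonneg _)
          _ = 0 := h
      exact CStarModuleRight.inner_self.mp (le_antisymm h1 CStarModuleRight.inner_self_nonneg)
    · rintro rfl
      rw [hinner₂, hr00]
      simp [(CStarModuleRight.inner_self (A := A) (x := (0 : N))).mpr rfl]
  · intro x hx y hy
    rw [hinner₂, hr0M x hx, star_zero, zero_mul, add_zero]
  · intro n
    constructor
    · rw [hinner₂]
      exact le_add_of_nonneg_right (star_mul_self_nonneg _)
    · rw [hinner₂, add_smul, one_smul]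
      exact add_le_add le_rfl (hkey n)
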